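/- The compatibility conditions between Hamilton's and Heisenberg's equations hold: for each k ∈ {1,2,3}, Σ_{i=1}^{3} [{A_i⁺, A_i⁻}, A_k⁺] = −2 A_k⁺ and Σ_{i=1}^{3} [{A_i⁺, A_i⁻}, A_k⁻] = +2 A_k⁻ (as linear operators on V). -/

import Mathlib

open scoped BigOperators
open Finset

/-- Index set: triples Θ = (θ₁,θ₂,θ₃) with θᵢ ∈ {0,1}. -/
abbrev WIdx := Fin 3 → Fin 2

/-- The 8-dimensional state space V = EuclideanSpace ℂ ({0,1}³). -/
abbrev WV := EuclideanSpace ℂ WIdx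

/-- Orthonormal basis vector e_Θ. -/
noncomputable def eV (Θ : WIdx) : WV := EuclideanSpace.single Θ 1

/-- The basis (e_Θ)_Θ of V, as a `Basis`. -/
noncomputable def bV : Module.Basis WIdx ℂ WV := (EuclideanSpace.basisFun WIdx ℂ).toBasis

/-- q(Θ) = θ₁ + θ₂ + θ₃. -/
def qv (Θ : WIdx) : ℕ := ∑ j, (Θ j : ℕ)

/-- Sign factor (−1)^(θ₁ + ⋯ + θ_{i−1}). -/
def sgnBelow (i : Fin 3) (Θ : WIdx) : ℂ :=
  (-1 : ℂ) ^ (∑ j : Fin 3, if (j : ℕ) < (i : ℕ) then (Θ j : ℕ) else 0)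

/-- Sign factor (−1)^(θ₁ + ⋯ + θ_i). -/
def sgnUpTo (i : Fin 3) (Θ : WIdx) : ℂ :=
  (-1 : ℂ) ^ (∑ j : Fin 3, if (j : ℕ) ≤ (i : ℕ) then (Θ j : ℕ) else 0)

/-- A_i⁻ e_Θ = θ_i (−1)^(θ₁+⋯+θ_{i−1}) √(p−q(Θ)+1) e_{Θ[θ_i↦0]}. -/
noncomputable def Aminus (p : ℕ) (i : Fin 3) : WV →ₗ[ℂ] WV :=
  bV.constr ℂ fun Θ =>
    (((Θ i : ℕ) : ℂ) * sgnBelow i Θ *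
      ((Real.sqrt ((p : ℝ) - (qv Θ : ℝ) + 1) : ℝ) : ℂ)) • eV (Function.update Θ i 0)

/-- A_i⁺ e_Θ = (1−θ_i) (−1)^(θ₁+⋯+θ_{i−1}) √(p−q(Θ)) e_{Θ[θ_i↦1]}. -/
noncomputable def Aplus (p : ℕ) (i : Fin 3) : WV →ₗ[ℂ] WV :=
  bV.constr ℂ fun Θ =>
    (((1 : ℂ) - ((Θ i : ℕ) : ℂ)) * sgnBelow i Θ *
      ((Real.sqrt ((p : ℝ) - (qv Θ : ℝ)) : ℝ) : ℂ)) • eV (Function.update Θ i 1)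

/-- Anticommutator {X,Y} = XY + YX. -/
noncomputable def acommOp (X Y : WV →ₗ[ℂ] WV) : WV →ₗ[ℂ] WV := X ∘ₗ Y + Y ∘ₗ X

/-- Commutator [X,Y] = XY − YX. -/
noncomputable def commOp (X Y : WV →ₗ[ℂ] WV) : WV →ₗ[ℂ] WV := X ∘ₗ Y - Y ∘ₗ X

/-- Dimensionless Hamiltonian ĥ = Σᵢ {A_i⁺, A_i⁻}. -/
noncomputable def hOp (p : ℕ) : WV →ₗ[ℂ] WV := ∑ i, acommOp (Aplus p i) (Aminus p i)

/-- Position operator r̂_k(t) = e^{−it} A_k⁺ + e^{it} A_k⁻. -/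
noncomputable def rOp (p : ℕ) (k : Fin 3) (t : ℝ) : WV →ₗ[ℂ] WV :=
  Complex.exp (-(t : ℂ) * Complex.I) • Aplus p k +
    Complex.exp ((t : ℂ) * Complex.I) • Aminus p k

/-- Momentum operator p̂_k(t) = −i (e^{−it} A_k⁺ − e^{it} A_k⁻). -/
noncomputable def pOp (p : ℕ) (k : Fin 3) (t : ℝ) : WV →ₗ[ℂ] WV :=
  (-Complex.I) • (Complex.exp (-(t : ℂ) * Complex.I) • Aplus p k -
    Complex.exp ((t : ℂ) * Complex.I) • Aminus p k)

/-- Levi-Civita symbol ε_{jkl} with ε_{123} = 1 (indices 0,1,2 here). -/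
def eps (j k l : Fin 3) : ℂ :=
  if (j, k, l) = (0, 1, 2) ∨ (j, k, l) = (1, 2, 0) ∨ (j, k, l) = (2, 0, 1) then 1
  else if (j, k, l) = (2, 1, 0) ∨ (j, k, l) = (1, 0, 2) ∨ (j, k, l) = (0, 2, 1) then -1
  else 0

/-- Angular momentum M_j = −i Σ_{k,l} ε_{jkl} {A_k⁺, A_l⁻}. -/
noncomputable def Mop (p : ℕ) (j : Fin 3) : WV →ₗ[ℂ] WV :=
  (-Complex.I) • ∑ k, ∑ l, eps j k l • acommOp (Aplus p k) (Aminus p l)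

/-- Eigenvectors v_k(Θ,t) of the position operator r̂_k(t). -/
noncomputable def vVec (k : Fin 3) (t : ℝ) (Θ : WIdx) : WV :=
  (((Real.sqrt 2)⁻¹ : ℝ) : ℂ) •
    (eV (Function.update Θ k 0) +
      (sgnUpTo k Θ * Complex.exp (-(t : ℂ) * Complex.I)) • eV (Function.update Θ k 1))

/-- Eigenvectors ṽ_k(Θ,t) of the momentum operator p̂_k(t). -/
noncomputable def vTilde (k : Fin 3) (t : ℝ) (Θ : WIdx) : WV :=
  (((Real.sqrt 2)⁻¹ : ℝ) : ℂ) •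
    (eV (Function.update Θ k 0) -
      (Complex.I * sgnUpTo k Θ * Complex.exp (-(t : ℂ) * Complex.I)) • eV (Function.update Θ k 1))

/-- The non-stationary state z = (1/√2)(e_{(0,0,0)} + e_{(0,0,1)}). -/
noncomputable def zState : WV :=
  (((Real.sqrt 2)⁻¹ : ℝ) : ℂ) • (eV ![0, 0, 0] + eV ![0, 0, 1])

/-- The state x₁ = (1/√2)(e_{(0,1,0)} + e_{(1,1,0)}). -/
noncomputable def x1State : WV :=
  (((Real.sqrt 2)⁻¹ : ℝ) : ℂ) • (eV ![0, 1, 0] + eV ![1, 1, 0])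

local notation "⟪" x ", " y "⟫" => @inner ℂ _ _ x y


section Stmt3Aux

open Function

lemma bV_eq (Θ : WIdx) : bV Θ = eV Θ := by
  simp [bV, eV, OrthonormalBasis.coe_toBasis, EuclideanSpace.basisFun_apply]

lemma aplus_eV (p : ℕ) (i : Fin 3) (Θ : WIdx) :
    Aplus p i (eV Θ) =
      (((1 : ℂ) - ((Θ i : ℕ) : ℂ)) * sgnBelow i Θ *
        ((Real.sqrt ((p : ℝ) - (qv Θ : ℝ)) : ℝ) : ℂ)) • eV (Function.update Θ i 1) := by
  rw [← bV_eq, Aplus, Module.Basis.constr_basis]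

lemma aminus_eV (p : ℕ) (i : Fin 3) (Θ : WIdx) :
    Aminus p i (eV Θ) =
      (((Θ i : ℕ) : ℂ) * sgnBelow i Θ *
        ((Real.sqrt ((p : ℝ) - (qv Θ : ℝ) + 1) : ℝ) : ℂ)) • eV (Function.update Θ i 0) := by
  rw [← bV_eq, Aminus, Module.Basis.constr_basis]

lemma qv_le (Θ : WIdx) : qv Θ ≤ 3 := by
  have h : ∀ j : Fin 3, (Θ j : ℕ) ≤ 1 := fun j => Nat.lt_succ_iff.mp (Θ j).isLt
  calc qv Θ ≤ ∑ _j : Fin 3, 1 := Finset.sum_le_sum fun j _ => h j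
    _ = 3 := by simp

lemma sgnBelow_update (i : Fin 3) (Θ : WIdx) (c : Fin 2) :
    sgnBelow i (Function.update Θ i c) = sgnBelow i Θ := by
  unfold sgnBelow
  congr 1
  refine Finset.sum_congr rfl fun j _ => ?_
  by_cases h : (j : ℕ) < (i : ℕ)
  · have hne : j ≠ i := fun e => by subst e; omega
    simp [h, Function.update_of_ne hne]
  · simp [h]

lemma sgn_sq (i : Fin 3) (Θ : WIdx) : sgnBelow i Θ * sgnBelow i Θ = 1 := by
  unfold sgnBelow
  rw [← pow_add]
  exact Even.neg_one_pow ⟨_, rfl⟩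

lemma qv_update_add (Θ : WIdx) (i : Fin 3) (c : Fin 2) :
    qv (Function.update Θ i c) + (Θ i : ℕ) = qv Θ + (c : ℕ) := by
  unfold qv
  have key : ∀ f : WIdx, (∑ j : Fin 3, (f j : ℕ)) =
      (f i : ℕ) + ∑ j ∈ Finset.univ.erase i, (f j : ℕ) :=
    fun f => (Finset.add_sum_erase _ _ (Finset.mem_univ i)).symm
  rw [key (Function.update Θ i c), key Θ]
  have herase : (∑ j ∈ Finset.univ.erase i, ((Function.update Θ i c j : ℕ))) =
      ∑ j ∈ Finset.univ.erase i, (Θ j : ℕ) :=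
    Finset.sum_congr rfl fun j hj => by rw [Function.update_of_ne (Finset.ne_of_mem_erase hj)]
  rw [herase, Function.update_self]
  ring

lemma acomm_eV (p : ℕ) (hp : 3 ≤ p) (i : Fin 3) (Θ : WIdx) :
    acommOp (Aplus p i) (Aminus p i) (eV Θ) =
      (((p : ℂ) - ((qv Θ : ℕ) : ℂ)) + ((Θ i : ℕ) : ℂ)) • eV Θ := by
  have hq3 : qv Θ ≤ 3 := qv_le Θ
  have hqp : qv Θ ≤ p := le_trans hq3 hp
  have hnn : (0 : ℝ) ≤ (p : ℝ) - (qv Θ : ℝ) := by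
    have : (qv Θ : ℝ) ≤ (p : ℝ) := by exact_mod_cast hqp
    linarith
  simp only [acommOp, LinearMap.add_apply, LinearMap.comp_apply]
  have h2 : Θ i = 0 ∨ Θ i = 1 := by omega
  rcases h2 with hi | hi
  · have hupd : Function.update Θ i (0 : Fin 2) = Θ := by
      rw [← hi]; exact Function.update_eq_self i Θ
    have hq1 : qv (Function.update Θ i 1) = qv Θ + 1 := by
      have h0 : (Θ i : ℕ) = 0 := by rw [hi]; rfl
      have := qv_update_add Θ i 1; omega
    rw [aminus_eV, aplus_eV, map_smul, map_smul, aminus_eV, aplus_eV]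
    rw [Function.update_idem, Function.update_idem, hupd]
    simp only [hi, Function.update_self, hq1, sgnBelow_update, Fin.val_zero, Fin.val_one,
      Nat.cast_zero, Nat.cast_one, zero_mul, mul_zero, zero_smul, smul_zero, zero_add, add_zero,
      sub_zero, one_mul]
    have harg : ((p : ℝ) - ((qv Θ + 1 : ℕ) : ℝ) + 1) = (p : ℝ) - (qv Θ : ℝ) := by
      push_cast; ring
    rw [harg]
    simp only [smul_smul]
    congr 1
    have hmul : ((Real.sqrt ((p : ℝ) - (qv Θ : ℝ)) : ℝ) : ℂ) *
        ((Real.sqrt ((p : ℝ) - (qv Θ : ℝ)) : ℝ) : ℂ) = (p : ℂ) - ((qv Θ : ℕ) : ℂ) := by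
      rw [← Complex.ofReal_mul, Real.mul_self_sqrt hnn]; push_cast; ring
    linear_combination (((Real.sqrt ((p : ℝ) - (qv Θ : ℝ)) : ℝ) : ℂ) *
      ((Real.sqrt ((p : ℝ) - (qv Θ : ℝ)) : ℝ) : ℂ)) * sgn_sq i Θ + hmul
  · have hupd : Function.update Θ i (1 : Fin 2) = Θ := by
      rw [← hi]; exact Function.update_eq_self i Θ
    have hq0 : qv (Function.update Θ i 0) + 1 = qv Θ := by
      have h1 : (Θ i : ℕ) = 1 := by rw [hi]; rfl
      have := qv_update_add Θ i 0; omega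
    rw [aminus_eV, aplus_eV, map_smul, map_smul, aminus_eV, aplus_eV]
    rw [Function.update_idem, Function.update_idem, hupd]
    simp only [hi, Function.update_self, sgnBelow_update, Fin.val_zero, Fin.val_one,
      Nat.cast_zero, Nat.cast_one, zero_mul, mul_zero, zero_smul, smul_zero, zero_add, add_zero,
      sub_self, sub_zero, one_mul]
    have hcast : ((qv (Function.update Θ i 0) : ℕ) : ℝ) = (qv Θ : ℝ) - 1 := by
      have : ((qv (Function.update Θ i 0) : ℕ) : ℝ) + 1 = ((qv Θ : ℕ) : ℝ) := by
        exact_mod_cast congrArg (fun n : ℕ => (n : ℝ)) hq0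
      linarith
    have harg : ((p : ℝ) - ((qv (Function.update Θ i 0) : ℕ) : ℝ)) =
        (p : ℝ) - (qv Θ : ℝ) + 1 := by rw [hcast]; ring
    rw [harg]
    simp only [smul_smul]
    congr 1
    have hmul : ((Real.sqrt ((p : ℝ) - (qv Θ : ℝ) + 1) : ℝ) : ℂ) *
        ((Real.sqrt ((p : ℝ) - (qv Θ : ℝ) + 1) : ℝ) : ℂ) = (p : ℂ) - ((qv Θ : ℕ) : ℂ) + 1 := by
      rw [← Complex.ofReal_mul, Real.mul_self_sqrt (by linarith)]; push_cast; ring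
    linear_combination (((Real.sqrt ((p : ℝ) - (qv Θ : ℝ) + 1) : ℝ) : ℂ) *
      ((Real.sqrt ((p : ℝ) - (qv Θ : ℝ) + 1) : ℝ) : ℂ)) * sgn_sq i Θ + hmul

lemma hOp_eV (p : ℕ) (hp : 3 ≤ p) (Θ : WIdx) :
    hOp p (eV Θ) = ((3 * (p : ℂ)) - 2 * ((qv Θ : ℕ) : ℂ)) • eV Θ := by
  unfold hOp
  rw [LinearMap.sum_apply]
  have h : ∀ i : Fin 3, acommOp (Aplus p i) (Aminus p i) (eV Θ)
      = (((p : ℂ) - ((qv Θ : ℕ) : ℂ)) + ((Θ i : ℕ) : ℂ)) • eV Θ :=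
    fun i => acomm_eV p hp i Θ
  simp only [h, ← Finset.sum_smul]
  congr 1
  have hq : (∑ i : Fin 3, ((Θ i : ℕ) : ℂ)) = ((qv Θ : ℕ) : ℂ) := by
    unfold qv; push_cast; ring
  rw [Finset.sum_add_distrib, hq]
  simp [Finset.sum_const]
  ring

lemma sum_comm_eq (p : ℕ) (X : WV →ₗ[ℂ] WV) :
    (∑ i : Fin 3, commOp (acommOp (Aplus p i) (Aminus p i)) X) = commOp (hOp p) X := by
  apply LinearMap.ext; intro v
  simp only [LinearMap.sum_apply, commOp, hOp, LinearMap.sub_apply, LinearMap.comp_apply,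
    Finset.sum_sub_distrib, map_sum]

end Stmt3Aux

/-- Σᵢ [{A_i⁺, A_i⁻}, A_k⁺] = −2 A_k⁺ and Σᵢ [{A_i⁺, A_i⁻}, A_k⁻] = +2 A_k⁻. -/
theorem stmt3 (p : ℕ) (hp : 3 ≤ p) (k : Fin 3) :
    (∑ i : Fin 3, commOp (acommOp (Aplus p i) (Aminus p i)) (Aplus p k)) =
      (-2 : ℂ) • Aplus p k ∧
    (∑ i : Fin 3, commOp (acommOp (Aplus p i) (Aminus p i)) (Aminus p k)) =
      (2 : ℂ) • Aminus p k := by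
  constructor
  · rw [sum_comm_eq]
    apply bV.ext
    intro Θ
    rw [bV_eq]
    simp only [commOp, LinearMap.sub_apply, LinearMap.comp_apply, LinearMap.smul_apply,
      hOp_eV p hp, aplus_eV, map_smul]
    have h2 : Θ k = 0 ∨ Θ k = 1 := by omega
    rcases h2 with hk | hk
    · have hq1 : qv (Function.update Θ k 1) = qv Θ + 1 := by
        have h0 : (Θ k : ℕ) = 0 := by rw [hk]; rfl
        have := qv_update_add Θ k 1; omega
      rw [hq1]
      simp only [smul_smul, ← sub_smul]
      congr 1
      push_cast
      ring
    · simp [hk]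
  · rw [sum_comm_eq]
    apply bV.ext
    intro Θ
    rw [bV_eq]
    simp only [commOp, LinearMap.sub_apply, LinearMap.comp_apply, LinearMap.smul_apply,
      hOp_eV p hp, aminus_eV, map_smul]
    have h2 : Θ k = 0 ∨ Θ k = 1 := by omega
    rcases h2 with hk | hk
    · simp [hk]
    · have hq0 : qv (Function.update Θ k 0) + 1 = qv Θ := by
        have h1 : (Θ k : ℕ) = 1 := by rw [hk]; rfl
        have := qv_update_add Θ k 0; omega
      have hq0' : ((qv (Function.update Θ k 0) : ℕ) : ℂ) = ((qv Θ : ℕ) : ℂ) - 1 := by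
        have h := congrArg (fun n : ℕ => (n : ℂ)) hq0
        push_cast at h
        linear_combination h
      rw [hq0']
      simp only [smul_smul, ← sub_smul]
      congr 1
      ring
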